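/- The token sliding reconfiguration graph of minimum skew forcing sets of a tree $T$ contains no edges: no two minimum skew forcing sets of $T$ differ by exchanging a vertex for an adjacent vertex. -/

import Mathlib

open SimpleGraph

variable {V : Type*}

/-- A skew fort: a nonempty vertex set `F` such that no vertex of the graph
has exactly one neighbor in `F`. -/
def SkewFort (G : SimpleGraph V) (F : Set V) : Prop :=
  F.Nonempty ∧ ∀ v : V, (G.neighborSet v ∩ F).ncard ≠ 1

/-- The vertices eventually forced blue by the skew color change rule starting
from the set `S` of initially blue vertices: a vertex `v` is forced if some
vertex `u` has `v` as its unique non-blue neighbor. -/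
inductive SkewForced (G : SimpleGraph V) (S : Set V) : V → Prop
  | mem : ∀ {v}, v ∈ S → SkewForced G S v
  | force : ∀ {u v}, G.Adj u v → (∀ w, G.Adj u w → w ≠ v → SkewForced G S w) →
      SkewForced G S v

/-- The skew closure of `S`: the final set of blue vertices. -/
def skewClosure (G : SimpleGraph V) (S : Set V) : Set V := {v | SkewForced G S v}

/-- `S` is a skew forcing set if its skew closure is everything. -/
def IsSkewForcingSet (G : SimpleGraph V) (S : Set V) : Prop :=
  skewClosure G S = Set.univ

/-- The skew forcing number: minimum cardinality of a skew forcing set. -/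
noncomputable def skewForcingNumber (G : SimpleGraph V) : ℕ :=
  sInf {n | ∃ S : Set V, S.ncard = n ∧ IsSkewForcingSet G S}

/-- Nothing in a fort disjoint from `S` ever gets forced. -/
lemma skewForced_not_mem_fort {G : SimpleGraph V} {S F : Set V}
    (hF : ∀ v : V, (G.neighborSet v ∩ F).ncard ≠ 1) (hdisj : ∀ x ∈ S, x ∉ F) :
    ∀ v, SkewForced G S v → v ∉ F := by
  intro v hv
  induction hv with
  | mem h => exact hdisj _ h
  | @force u v hadj hall ih =>
    intro hvF
    apply hF u
    have hset : G.neighborSet u ∩ F = {v} := by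
      apply Set.eq_singleton_iff_unique_mem.mpr
      refine ⟨⟨hadj, hvF⟩, ?_⟩
      intro w hw
      by_contra hne
      exact ih w hw.1 hne hw.2
    rw [hset, Set.ncard_singleton]

/-- The complement of the skew closure of a non-forcing set is a skew fort. -/
lemma fort_compl_closure (G : SimpleGraph V) (S : Set V)
    (h : ¬ IsSkewForcingSet G S) : SkewFort G (skewClosure G S)ᶜ := by
  constructor
  · rw [Set.nonempty_compl]
    exact h
  · intro u hcard
    obtain ⟨v, hv⟩ := Set.ncard_eq_one.mp hcard
    have hvmem : v ∈ G.neighborSet u ∩ (skewClosure G S)ᶜ := by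
      rw [hv]; rfl
    have hforced : SkewForced G S v := by
      refine SkewForced.force hvmem.1 (fun w hw hne => ?_)
      by_contra hns
      have hwmem : w ∈ G.neighborSet u ∩ (skewClosure G S)ᶜ := ⟨hw, hns⟩
      rw [hv] at hwmem
      exact hne hwmem
    exact hvmem.2 hforced

/-- A skew forcing set meets every skew fort. -/
lemma forcing_meets_fort {G : SimpleGraph V} {S F : Set V}
    (hS : IsSkewForcingSet G S) (hF : SkewFort G F) : ∃ x, x ∈ S ∧ x ∈ F := by
  by_contra hc
  push_neg at hc
  obtain ⟨x, hx⟩ := hF.1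
  have hforced : SkewForced G S x := by
    have : x ∈ skewClosure G S := hS.symm ▸ Set.mem_univ x
    exact this
  exact skewForced_not_mem_fort hF.2 hc x hforced hx

/-- In an acyclic graph, a fort cannot contain two adjacent vertices. -/
lemma no_adjacent_in_fort [Fintype V] {T : SimpleGraph V} (hA : T.IsAcyclic)
    {F : Set V} (hF : ∀ v : V, (T.neighborSet v ∩ F).ncard ≠ 1)
    {v₁ v₂ : V} (h1 : v₁ ∈ F) (h2 : v₂ ∈ F) (hadj : T.Adj v₁ v₂) : False := by
  classical
  have key : ∀ n : ℕ, ∃ (x : V) (p : T.Walk x v₂),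
      p.IsPath ∧ p.length = n + 1 ∧ ∀ w ∈ p.support, w ∈ F := by
    intro n
    induction n with
    | zero =>
      refine ⟨v₁, Walk.cons hadj Walk.nil, ?_, by simp, ?_⟩
      · simp [hadj.ne]
      · intro w hw
        simp only [Walk.support_cons, Walk.support_nil, List.mem_cons,
          List.mem_singleton] at hw
        rcases hw with rfl | rfl | h
        · exact h1
        · exact h2
        · exact absurd h List.not_mem_nil
    | succ n ih =>
      obtain ⟨x, p, hp, hlen, hsup⟩ := ih
      have hxv : x ≠ v₂ := by
        rintro rfl
        rw [Walk.isPath_iff_eq_nil] at hp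
        rw [hp] at hlen
        simp at hlen
      obtain ⟨u, h, q, rfl⟩ := Walk.exists_eq_cons_of_ne hxv p
      have hxF : x ∈ F := hsup x (by simp)
      have huF : u ∈ F := hsup u (by simp)
      have hu : u ∈ T.neighborSet x ∩ F := ⟨h, huF⟩
      have hqp : q.IsPath := ((Walk.cons_isPath_iff h q).mp hp).1
      have hxq : x ∉ q.support := ((Walk.cons_isPath_iff h q).mp hp).2
      have hy : ∃ y ∈ T.neighborSet x ∩ F, y ≠ u := by
        by_contra hc
        push_neg at hc
        apply hF x
        have hsingle : T.neighborSet x ∩ F = {u} :=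
          Set.eq_singleton_iff_unique_mem.mpr ⟨hu, hc⟩
        rw [hsingle, Set.ncard_singleton]
      obtain ⟨y, ⟨hyx, hyF⟩, hyu⟩ := hy
      have hyx' : T.Adj x y := hyx
      have hynotsup : y ∉ (Walk.cons h q).support := by
        intro hysup
        rw [Walk.support_cons, List.mem_cons] at hysup
        rcases hysup with rfl | hyq
        · exact T.irrefl hyx'
        · -- build a cycle, contradiction with acyclicity
          have htp : (q.takeUntil y hyq).IsPath := hqp.takeUntil hyq
          have hxt : x ∉ (q.takeUntil y hyq).support := fun hx =>
            hxq (Walk.support_takeUntil_subset q hyq hx)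
          have hr : (Walk.cons h (q.takeUntil y hyq)).IsPath :=
            (Walk.cons_isPath_iff h _).mpr ⟨htp, hxt⟩
          have hedge : s(y, x) ∉ (Walk.cons h (q.takeUntil y hyq)).edges := by
            rw [Walk.edges_cons]
            intro hmem
            rcases List.mem_cons.mp hmem with heq | hmem'
            · rw [Sym2.eq_iff] at heq
              rcases heq with ⟨h1', _⟩ | ⟨h1', _⟩
              · exact T.irrefl (h1' ▸ hyx')
              · exact hyu h1'
            · exact hxt (Walk.snd_mem_support_of_mem_edges _ hmem')
          have hcyc : (Walk.cons hyx'.symm (Walk.cons h (q.takeUntil y hyq))).IsCycle :=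
            (Walk.cons_isCycle_iff _ hyx'.symm).mpr ⟨hr, hedge⟩
          exact hA _ hcyc
      refine ⟨y, Walk.cons hyx'.symm (Walk.cons h q), ?_, ?_, ?_⟩
      · exact (Walk.cons_isPath_iff _ _).mpr ⟨hp, hynotsup⟩
      · simp only [Walk.length_cons] at hlen ⊢
        omega
      · intro w hw
        rw [Walk.support_cons, List.mem_cons] at hw
        rcases hw with rfl | hw
        · exact hyF
        · exact hsup w hw
  obtain ⟨x, p, hp, hlen, _⟩ := key (Fintype.card V)
  have := hp.length_lt
  omega

/-- No two minimum skew forcing sets of a tree differ by a slide: the skew token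
sliding graph of a tree has no edges. -/
theorem tree_skew_token_sliding_no_edges [Fintype V] (T : SimpleGraph V) (hT : T.IsTree)
    (S₁ S₂ : Set V)
    (h₁ : IsSkewForcingSet T S₁) (h₁c : S₁.ncard = skewForcingNumber T)
    (h₂ : IsSkewForcingSet T S₂) (h₂c : S₂.ncard = skewForcingNumber T) :
    ¬ ∃ v₁ v₂ : V, S₁ \ S₂ = {v₁} ∧ S₂ \ S₁ = {v₂} ∧ T.Adj v₁ v₂ := by
  rintro ⟨v₁, v₂, h12, h21, hadj⟩
  have hv1 : v₁ ∈ S₁ \ S₂ := by rw [h12]; rfl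
  have hv2 : v₂ ∈ S₂ \ S₁ := by rw [h21]; rfl
  set C := S₁ ∩ S₂ with hC
  have hCsub : C ⊂ S₁ := ⟨Set.inter_subset_left, fun hs => hv1.2 (hs hv1.1).2⟩
  have hlt : C.ncard < S₁.ncard := Set.ncard_lt_ncard hCsub (Set.toFinite S₁)
  have hCnot : ¬ IsSkewForcingSet T C := by
    intro hCf
    have hle : skewForcingNumber T ≤ C.ncard := Nat.sInf_le ⟨C, rfl, hCf⟩
    omega
  have hFort := fort_compl_closure T C hCnot
  have hdisjC : ∀ x ∈ C, x ∉ (skewClosure T C)ᶜ := fun x hx hxF =>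
    hxF (SkewForced.mem hx)
  -- v₁ is in the fort
  have hv1F : v₁ ∈ (skewClosure T C)ᶜ := by
    obtain ⟨x, hxS, hxF⟩ := forcing_meets_fort h₁ hFort
    have hxC : x ∉ C := fun hc => hdisjC x hc hxF
    have hxS2 : x ∉ S₂ := fun hs2 => hxC ⟨hxS, hs2⟩
    have : x ∈ S₁ \ S₂ := ⟨hxS, hxS2⟩
    rw [h12] at this
    rwa [← this]
  have hv2F : v₂ ∈ (skewClosure T C)ᶜ := by
    obtain ⟨x, hxS, hxF⟩ := forcing_meets_fort h₂ hFort
    have hxC : x ∉ C := fun hc => hdisjC x hc hxF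
    have hxS1 : x ∉ S₁ := fun hs1 => hxC ⟨hs1, hxS⟩
    have : x ∈ S₂ \ S₁ := ⟨hxS, hxS1⟩
    rw [h21] at this
    rwa [← this]
  exact no_adjacent_in_fort hT.2 hFort.2 hv1F hv2F hadj
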